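/- For an even-dimensional antisymmetric matrix normalized by Tr(ω†ω) = 1/2 in the two-fermion two-site case (4×4), the fermionic concurrence 𝒞(ω) = 8|pf(ω)| satisfies 0 ≤ 𝒞(ω) ≤ 1, with 𝒞(ω) = 0 iff ω has rank ≤ 2 (Slater rank one). -/

import Mathlib

open Matrix

/-- The Pfaffian of a `2L × 2L` complex matrix,
`pf ω = (1/(2^L L!)) ∑_π sign(π) ∏_{j=1}^{L} ω_{π(2j−1), π(2j)}`. -/
noncomputable def pf (L : ℕ) (ω : Matrix (Fin (2 * L)) (Fin (2 * L)) ℂ) : ℂ :=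
  (1 / ((2 : ℂ) ^ L * (Nat.factorial L : ℂ))) *
    ∑ π : Equiv.Perm (Fin (2 * L)),
      ((Equiv.Perm.sign π : ℤ) : ℂ) *
        ∏ j : Fin L,
          ω (π ⟨2 * j.val, by have := j.isLt; omega⟩)
            (π ⟨2 * j.val + 1, by have := j.isLt; omega⟩)

def σp (i : Fin 4) (j : Fin 3) (k : Fin 2) : Equiv.Perm (Fin 4) :=
  Equiv.Perm.decomposeFin.symm (i, Equiv.Perm.decomposeFin.symm (j,
    Equiv.Perm.decomposeFin.symm (k, 1)))

lemma sg_000 : Equiv.Perm.sign (σp 0 0 0) = 1 := by decide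
lemma ap_000_0 : σp 0 0 0 0 = 0 := by decide
lemma ap_000_1 : σp 0 0 0 1 = 1 := by decide
lemma ap_000_2 : σp 0 0 0 2 = 2 := by decide
lemma ap_000_3 : σp 0 0 0 3 = 3 := by decide
lemma sg_001 : Equiv.Perm.sign (σp 0 0 1) = -1 := by decide
lemma ap_001_0 : σp 0 0 1 0 = 0 := by decide
lemma ap_001_1 : σp 0 0 1 1 = 1 := by decide
lemma ap_001_2 : σp 0 0 1 2 = 3 := by decide
lemma ap_001_3 : σp 0 0 1 3 = 2 := by decide
lemma sg_010 : Equiv.Perm.sign (σp 0 1 0) = -1 := by decide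
lemma ap_010_0 : σp 0 1 0 0 = 0 := by decide
lemma ap_010_1 : σp 0 1 0 1 = 2 := by decide
lemma ap_010_2 : σp 0 1 0 2 = 1 := by decide
lemma ap_010_3 : σp 0 1 0 3 = 3 := by decide
lemma sg_011 : Equiv.Perm.sign (σp 0 1 1) = 1 := by decide
lemma ap_011_0 : σp 0 1 1 0 = 0 := by decide
lemma ap_011_1 : σp 0 1 1 1 = 2 := by decide
lemma ap_011_2 : σp 0 1 1 2 = 3 := by decide
lemma ap_011_3 : σp 0 1 1 3 = 1 := by decide
lemma sg_020 : Equiv.Perm.sign (σp 0 2 0) = -1 := by decide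
lemma ap_020_0 : σp 0 2 0 0 = 0 := by decide
lemma ap_020_1 : σp 0 2 0 1 = 3 := by decide
lemma ap_020_2 : σp 0 2 0 2 = 2 := by decide
lemma ap_020_3 : σp 0 2 0 3 = 1 := by decide
lemma sg_021 : Equiv.Perm.sign (σp 0 2 1) = 1 := by decide
lemma ap_021_0 : σp 0 2 1 0 = 0 := by decide
lemma ap_021_1 : σp 0 2 1 1 = 3 := by decide
lemma ap_021_2 : σp 0 2 1 2 = 1 := by decide
lemma ap_021_3 : σp 0 2 1 3 = 2 := by decide
lemma sg_100 : Equiv.Perm.sign (σp 1 0 0) = -1 := by decide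
lemma ap_100_0 : σp 1 0 0 0 = 1 := by decide
lemma ap_100_1 : σp 1 0 0 1 = 0 := by decide
lemma ap_100_2 : σp 1 0 0 2 = 2 := by decide
lemma ap_100_3 : σp 1 0 0 3 = 3 := by decide
lemma sg_101 : Equiv.Perm.sign (σp 1 0 1) = 1 := by decide
lemma ap_101_0 : σp 1 0 1 0 = 1 := by decide
lemma ap_101_1 : σp 1 0 1 1 = 0 := by decide
lemma ap_101_2 : σp 1 0 1 2 = 3 := by decide
lemma ap_101_3 : σp 1 0 1 3 = 2 := by decide
lemma sg_110 : Equiv.Perm.sign (σp 1 1 0) = 1 := by decide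
lemma ap_110_0 : σp 1 1 0 0 = 1 := by decide
lemma ap_110_1 : σp 1 1 0 1 = 2 := by decide
lemma ap_110_2 : σp 1 1 0 2 = 0 := by decide
lemma ap_110_3 : σp 1 1 0 3 = 3 := by decide
lemma sg_111 : Equiv.Perm.sign (σp 1 1 1) = -1 := by decide
lemma ap_111_0 : σp 1 1 1 0 = 1 := by decide
lemma ap_111_1 : σp 1 1 1 1 = 2 := by decide
lemma ap_111_2 : σp 1 1 1 2 = 3 := by decide
lemma ap_111_3 : σp 1 1 1 3 = 0 := by decide
lemma sg_120 : Equiv.Perm.sign (σp 1 2 0) = 1 := by decide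
lemma ap_120_0 : σp 1 2 0 0 = 1 := by decide
lemma ap_120_1 : σp 1 2 0 1 = 3 := by decide
lemma ap_120_2 : σp 1 2 0 2 = 2 := by decide
lemma ap_120_3 : σp 1 2 0 3 = 0 := by decide
lemma sg_121 : Equiv.Perm.sign (σp 1 2 1) = -1 := by decide
lemma ap_121_0 : σp 1 2 1 0 = 1 := by decide
lemma ap_121_1 : σp 1 2 1 1 = 3 := by decide
lemma ap_121_2 : σp 1 2 1 2 = 0 := by decide
lemma ap_121_3 : σp 1 2 1 3 = 2 := by decide
lemma sg_200 : Equiv.Perm.sign (σp 2 0 0) = -1 := by decide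
lemma ap_200_0 : σp 2 0 0 0 = 2 := by decide
lemma ap_200_1 : σp 2 0 0 1 = 1 := by decide
lemma ap_200_2 : σp 2 0 0 2 = 0 := by decide
lemma ap_200_3 : σp 2 0 0 3 = 3 := by decide
lemma sg_201 : Equiv.Perm.sign (σp 2 0 1) = 1 := by decide
lemma ap_201_0 : σp 2 0 1 0 = 2 := by decide
lemma ap_201_1 : σp 2 0 1 1 = 1 := by decide
lemma ap_201_2 : σp 2 0 1 2 = 3 := by decide
lemma ap_201_3 : σp 2 0 1 3 = 0 := by decide
lemma sg_210 : Equiv.Perm.sign (σp 2 1 0) = 1 := by decide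
lemma ap_210_0 : σp 2 1 0 0 = 2 := by decide
lemma ap_210_1 : σp 2 1 0 1 = 0 := by decide
lemma ap_210_2 : σp 2 1 0 2 = 1 := by decide
lemma ap_210_3 : σp 2 1 0 3 = 3 := by decide
lemma sg_211 : Equiv.Perm.sign (σp 2 1 1) = -1 := by decide
lemma ap_211_0 : σp 2 1 1 0 = 2 := by decide
lemma ap_211_1 : σp 2 1 1 1 = 0 := by decide
lemma ap_211_2 : σp 2 1 1 2 = 3 := by decide
lemma ap_211_3 : σp 2 1 1 3 = 1 := by decide
lemma sg_220 : Equiv.Perm.sign (σp 2 2 0) = 1 := by decide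
lemma ap_220_0 : σp 2 2 0 0 = 2 := by decide
lemma ap_220_1 : σp 2 2 0 1 = 3 := by decide
lemma ap_220_2 : σp 2 2 0 2 = 0 := by decide
lemma ap_220_3 : σp 2 2 0 3 = 1 := by decide
lemma sg_221 : Equiv.Perm.sign (σp 2 2 1) = -1 := by decide
lemma ap_221_0 : σp 2 2 1 0 = 2 := by decide
lemma ap_221_1 : σp 2 2 1 1 = 3 := by decide
lemma ap_221_2 : σp 2 2 1 2 = 1 := by decide
lemma ap_221_3 : σp 2 2 1 3 = 0 := by decide
lemma sg_300 : Equiv.Perm.sign (σp 3 0 0) = -1 := by decide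
lemma ap_300_0 : σp 3 0 0 0 = 3 := by decide
lemma ap_300_1 : σp 3 0 0 1 = 1 := by decide
lemma ap_300_2 : σp 3 0 0 2 = 2 := by decide
lemma ap_300_3 : σp 3 0 0 3 = 0 := by decide
lemma sg_301 : Equiv.Perm.sign (σp 3 0 1) = 1 := by decide
lemma ap_301_0 : σp 3 0 1 0 = 3 := by decide
lemma ap_301_1 : σp 3 0 1 1 = 1 := by decide
lemma ap_301_2 : σp 3 0 1 2 = 0 := by decide
lemma ap_301_3 : σp 3 0 1 3 = 2 := by decide
lemma sg_310 : Equiv.Perm.sign (σp 3 1 0) = 1 := by decide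
lemma ap_310_0 : σp 3 1 0 0 = 3 := by decide
lemma ap_310_1 : σp 3 1 0 1 = 2 := by decide
lemma ap_310_2 : σp 3 1 0 2 = 1 := by decide
lemma ap_310_3 : σp 3 1 0 3 = 0 := by decide
lemma sg_311 : Equiv.Perm.sign (σp 3 1 1) = -1 := by decide
lemma ap_311_0 : σp 3 1 1 0 = 3 := by decide
lemma ap_311_1 : σp 3 1 1 1 = 2 := by decide
lemma ap_311_2 : σp 3 1 1 2 = 0 := by decide
lemma ap_311_3 : σp 3 1 1 3 = 1 := by decide
lemma sg_320 : Equiv.Perm.sign (σp 3 2 0) = 1 := by decide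
lemma ap_320_0 : σp 3 2 0 0 = 3 := by decide
lemma ap_320_1 : σp 3 2 0 1 = 0 := by decide
lemma ap_320_2 : σp 3 2 0 2 = 2 := by decide
lemma ap_320_3 : σp 3 2 0 3 = 1 := by decide
lemma sg_321 : Equiv.Perm.sign (σp 3 2 1) = -1 := by decide
lemma ap_321_0 : σp 3 2 1 0 = 3 := by decide
lemma ap_321_1 : σp 3 2 1 1 = 0 := by decide
lemma ap_321_2 : σp 3 2 1 2 = 1 := by decide
lemma ap_321_3 : σp 3 2 1 3 = 2 := by decide

lemma perm_sum4 (F : Equiv.Perm (Fin 4) → ℂ) :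
    ∑ π : Equiv.Perm (Fin 4), F π =
    ∑ i : Fin 4, ∑ j : Fin 3, ∑ k : Fin 2, F (σp i j k) := by
  rw [← Equiv.sum_comp Equiv.Perm.decomposeFin.symm F, Fintype.sum_prod_type]
  refine Finset.sum_congr rfl fun i _ => ?_
  rw [← Equiv.sum_comp (Equiv.Perm.decomposeFin.symm : Fin 3 × _ ≃ _), Fintype.sum_prod_type]
  refine Finset.sum_congr rfl fun j _ => ?_
  rw [← Equiv.sum_comp (Equiv.Perm.decomposeFin.symm : Fin 2 × _ ≃ _), Fintype.sum_prod_type]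
  refine Finset.sum_congr rfl fun k _ => ?_
  rw [Finset.univ_unique, Finset.sum_singleton]
  congr

lemma pf_formula (ω : Matrix (Fin (2*2)) (Fin (2*2)) ℂ) (h : ωᵀ = -ω) :
    pf 2 ω = ω 0 1 * ω 2 3 - ω 0 2 * ω 1 3 + ω 0 3 * ω 1 2 := by
  have h' : ∀ i j, ω j i = -ω i j := fun i j => by
    have := congrFun (congrFun h j) i
    simp only [Matrix.transpose_apply, Matrix.neg_apply] at this
    linear_combination this
  have key : pf 2 ω = (1/8) * ∑ π : Equiv.Perm (Fin 4),
      ((Equiv.Perm.sign π : ℤ) : ℂ) * (ω (π 0) (π 1) * ω (π 2) (π 3)) := by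
    unfold pf
    congr 1
    · norm_num
    · refine Finset.sum_congr rfl fun π _ => ?_
      rw [Fin.prod_univ_two]
      rfl
  rw [key, perm_sum4]
  simp only [Fin.sum_univ_four, Fin.sum_univ_three, Fin.sum_univ_two,
    sg_000, ap_000_0, ap_000_1, ap_000_2, ap_000_3, sg_001, ap_001_0, ap_001_1, ap_001_2, ap_001_3, sg_010, ap_010_0, ap_010_1, ap_010_2, ap_010_3, sg_011, ap_011_0, ap_011_1, ap_011_2, ap_011_3, sg_020, ap_020_0, ap_020_1, ap_020_2, ap_020_3, sg_021, ap_021_0, ap_021_1, ap_021_2, ap_021_3, sg_100, ap_100_0, ap_100_1, ap_100_2, ap_100_3, sg_101, ap_101_0, ap_101_1, ap_101_2, ap_101_3, sg_110, ap_110_0, ap_110_1, ap_110_2, ap_110_3, sg_111, ap_111_0, ap_111_1, ap_111_2, ap_111_3, sg_120, ap_120_0, ap_120_1, ap_120_2, ap_120_3, sg_121, ap_121_0, ap_121_1, ap_121_2, ap_121_3, sg_200, ap_200_0, ap_200_1, ap_200_2, ap_200_3, sg_201, ap_201_0, ap_201_1, ap_201_2, ap_201_3, sg_210, ap_210_0,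 ap_210_1, ap_210_2, ap_210_3, sg_211, ap_211_0, ap_211_1, ap_211_2, ap_211_3, sg_220, ap_220_0, ap_220_1, ap_220_2, ap_220_3, sg_221, ap_221_0, ap_221_1, ap_221_2, ap_221_3, sg_300, ap_300_0, ap_300_1, ap_300_2, ap_300_3, sg_301, ap_301_0, ap_301_1, ap_301_2, ap_301_3, sg_310, ap_310_0, ap_310_1, ap_310_2, ap_310_3, sg_311, ap_311_0, ap_311_1, ap_311_2, ap_311_3, sg_320, ap_320_0, ap_320_1, ap_320_2, ap_320_3, sg_321, ap_321_0, ap_321_1, ap_321_2, ap_321_3,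
    Units.val_one, Units.val_neg, Int.cast_one, Int.cast_neg, neg_mul, one_mul]
  rw [h' 0 1, h' 0 2, h' 0 3, h' 1 2, h' 1 3, h' 2 3]
  ring

lemma sum4' {M : Type*} [AddCommMonoid M] (f : Fin (2*2) → M) :
    ∑ i, f i = f 0 + f 1 + f 2 + f 3 := Fin.sum_univ_four f

lemma two_le_rank_of_antisym (A : Matrix (Fin (2*2)) (Fin (2*2)) ℂ) (h : ∀ i j, A j i = -A i j)
    {i j : Fin (2*2)} (hij : A i j ≠ 0) : 2 ≤ A.rank := by
  have hd : ∀ i, A i i = 0 := fun i => by linear_combination (1/2 : ℂ) * h i i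
  set S : Matrix (Fin 2) (Fin (2*2)) ℂ := Matrix.of fun x k => if k = ![i,j] x then 1 else 0 with hS
  set E : Matrix (Fin (2*2)) (Fin 2) ℂ := Matrix.of fun k l => if k = ![i,j] l then 1 else 0 with hE
  have hC : S * A * E = !![(0:ℂ), A i j; -(A i j), 0] := by
    ext x y
    fin_cases x <;> fin_cases y <;>
      simp [hS, hE, Matrix.mul_apply, ite_mul, mul_ite, mul_one, mul_zero, one_mul, zero_mul,
        Finset.sum_ite_eq', Finset.sum_ite_eq, hd, h i j]
    all_goals (repeat rw [Fintype.sum_eq_single i (fun k hk => by simp [hk])])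
    all_goals simp [hd, h i j]
  have hu : IsUnit (S * A * E) := by
    rw [Matrix.isUnit_iff_isUnit_det, hC, Matrix.det_fin_two_of]
    simp only [mul_zero, zero_mul, zero_sub, mul_neg, neg_neg]
    exact (isUnit_iff_ne_zero).2 (by simpa using mul_ne_zero hij hij)
  have h2 : (S * A * E).rank = 2 := by
    rw [Matrix.rank_of_isUnit _ hu, Fintype.card_fin]
  calc 2 = (S * A * E).rank := h2.symm
    _ ≤ (S * A).rank := Matrix.rank_mul_le_left (S * A) E
    _ ≤ A.rank := Matrix.rank_mul_le_right S A

/-- For a 4×4 antisymmetric matrix `ω` (two fermions on two sites) normalized by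
`Tr(ω†ω) = 1/2`, the fermionic concurrence `𝒞(ω) = 8|pf ω|` satisfies
`0 ≤ 𝒞(ω) ≤ 1`, and `𝒞(ω) = 0` if and only if `ω` has rank at most 2
(Slater rank one). -/
theorem fermionic_concurrence_bounds (ω : Matrix (Fin (2 * 2)) (Fin (2 * 2)) ℂ)
    (h : ωᵀ = -ω) (hnorm : (ωᴴ * ω).trace = 1 / 2) :
    0 ≤ 8 * ‖pf 2 ω‖ ∧ 8 * ‖pf 2 ω‖ ≤ 1 ∧
      (8 * ‖pf 2 ω‖ = 0 ↔ ω.rank ≤ 2) := by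
  have h' : ∀ i j, ω j i = -ω i j := fun i j => by
    have := congrFun (congrFun h j) i
    simp only [Matrix.transpose_apply, Matrix.neg_apply] at this
    linear_combination this
  have hd : ∀ i, ω i i = 0 := fun i => by linear_combination (1/2 : ℂ) * h' i i
  have hω : ω = !![0, ω 0 1, ω 0 2, ω 0 3; -ω 0 1, 0, ω 1 2, ω 1 3;
      -ω 0 2, -ω 1 2, 0, ω 2 3; -ω 0 3, -ω 1 3, -ω 2 3, 0] := by
    ext i j
    fin_cases i <;> fin_cases j <;>
      simp [hd, h' 0 1, h' 0 2, h' 0 3, h' 1 2, h' 1 3, h' 2 3]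
  have hr : Complex.normSq (ω 0 1) + Complex.normSq (ω 0 2) + Complex.normSq (ω 0 3)
      + Complex.normSq (ω 1 2) + Complex.normSq (ω 1 3) + Complex.normSq (ω 2 3) = 1/4 := by
    have ht := hnorm
    simp only [Matrix.trace, Matrix.diag, Matrix.mul_apply, Matrix.conjTranspose_apply,
      sum4'] at ht
    rw [h' 0 1, h' 0 2, h' 0 3, h' 1 2, h' 1 3, h' 2 3] at ht
    simp only [hd, star_neg, star_zero, mul_zero, zero_mul, neg_mul, mul_neg, neg_neg,
      Complex.star_def, ← Complex.normSq_eq_conj_mul_self] at ht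
    have : ((Complex.normSq (ω 0 1) + Complex.normSq (ω 0 2) + Complex.normSq (ω 0 3)
      + Complex.normSq (ω 1 2) + Complex.normSq (ω 1 3) + Complex.normSq (ω 2 3) : ℝ) : ℂ)
        = ((1/4 : ℝ) : ℂ) := by push_cast; linear_combination (1/2 : ℂ) * ht
    exact_mod_cast this
  have hdet : ω.det = (ω 0 1 * ω 2 3 - ω 0 2 * ω 1 3 + ω 0 3 * ω 1 2)^2 := by
    rw [hω]
    simp [Matrix.det_succ_row_zero, Fin.sum_univ_succ, Fin.succAbove_of_lt_succ, Fin.succAbove_of_succ_le]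
    ring
  refine ⟨by positivity, ?_, ?_⟩
  · -- upper bound
    rw [pf_formula ω h]
    have t1 : ‖ω 0 1 * ω 2 3 - ω 0 2 * ω 1 3 + ω 0 3 * ω 1 2‖
        ≤ ‖ω 0 1‖ * ‖ω 2 3‖ + ‖ω 0 2‖ * ‖ω 1 3‖
          + ‖ω 0 3‖ * ‖ω 1 2‖ := by
      calc ‖ω 0 1 * ω 2 3 - ω 0 2 * ω 1 3 + ω 0 3 * ω 1 2‖
          ≤ ‖ω 0 1 * ω 2 3 - ω 0 2 * ω 1 3‖ + ‖ω 0 3 * ω 1 2‖ :=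
            norm_add_le _ _
        _ ≤ ‖ω 0 1 * ω 2 3‖ + ‖ω 0 2 * ω 1 3‖
            + ‖ω 0 3 * ω 1 2‖ := by
            have := norm_sub_le (ω 0 1 * ω 2 3) (ω 0 2 * ω 1 3)
            linarith
        _ = ‖ω 0 1‖ * ‖ω 2 3‖ + ‖ω 0 2‖ * ‖ω 1 3‖
            + ‖ω 0 3‖ * ‖ω 1 2‖ := by simp [_root_.map_mul]
    nlinarith [t1, hr, Complex.sq_norm (ω 0 1), Complex.sq_norm (ω 0 2), Complex.sq_norm (ω 0 3),
      Complex.sq_norm (ω 1 2), Complex.sq_norm (ω 1 3), Complex.sq_norm (ω 2 3),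
      sq_nonneg (‖ω 0 1‖ - ‖ω 2 3‖),
      sq_nonneg (‖ω 0 2‖ - ‖ω 1 3‖),
      sq_nonneg (‖ω 0 3‖ - ‖ω 1 2‖)]
  constructor
  · -- vanishing ⇒ rank ≤ 2
    intro h8
    have habs : ‖pf 2 ω‖ = 0 := by linarith [norm_nonneg (pf 2 ω)]
    have hpf : pf 2 ω = 0 := by simpa using habs
    have hp : ω 0 1 * ω 2 3 - ω 0 2 * ω 1 3 + ω 0 3 * ω 1 2 = 0 := by
      rw [← pf_formula ω h]; exact hpf
    rcases eq_or_ne ω 0 with rfl | hne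
    · simp [Matrix.rank_zero]
    set N : Matrix (Fin (2*2)) (Fin (2*2)) ℂ :=
      !![0, ω 2 3, -ω 1 3, ω 1 2; -ω 2 3, 0, ω 0 3, -ω 0 2;
         ω 1 3, -ω 0 3, 0, ω 0 1; -ω 1 2, ω 0 2, -ω 0 1, 0] with hN
    have hmul : ω * N = 0 := by
      ext x y
      fin_cases x <;> fin_cases y <;>
        · simp only [Matrix.mul_apply, sum4', hN, Matrix.zero_apply]
          simp [h' 0 1, h' 0 2, h' 0 3, h' 1 2, h' 1 3, h' 2 3, hd]
          first
            | linear_combination hp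
            | linear_combination -hp
            | ring
    have hN' : ∀ i j, N j i = -N i j := by
      intro i j; fin_cases i <;> fin_cases j <;> simp [hN]
    have hNne : ∃ i j, N i j ≠ 0 := by
      by_contra hc
      push_neg at hc
      apply hne
      have e01 : ω 0 1 = 0 := by simpa [hN] using hc 2 3
      have e02 : ω 0 2 = 0 := by simpa [hN] using hc 1 3
      have e03 : ω 0 3 = 0 := by simpa [hN] using hc 1 2
      have e12 : ω 1 2 = 0 := by simpa [hN] using hc 0 3
      have e13 : ω 1 3 = 0 := by simpa [hN] using hc 0 2
      have e23 : ω 2 3 = 0 := by simpa [hN] using hc 0 1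
      rw [hω]
      ext i j
      fin_cases i <;> fin_cases j <;>
        simp [e01, e02, e03, e12, e13, e23, Matrix.vecHead, Matrix.vecTail]
    obtain ⟨i, j, hNij⟩ := hNne
    have hrank := Matrix.rank_add_rank_le_card_of_mul_eq_zero hmul
    rw [Fintype.card_fin] at hrank
    have h2 := two_le_rank_of_antisym N hN' hNij
    omega
  · -- rank ≤ 2 ⇒ vanishing
    intro hrk
    have hp : ω 0 1 * ω 2 3 - ω 0 2 * ω 1 3 + ω 0 3 * ω 1 2 = 0 := by
      by_contra hp0
      have hu : IsUnit ω.det := by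
        rw [hdet]; exact (pow_ne_zero 2 hp0).isUnit
      have h4 := Matrix.rank_of_isUnit ω ((Matrix.isUnit_iff_isUnit_det ω).2 hu)
      rw [Fintype.card_fin] at h4
      omega
    rw [pf_formula ω h, hp]
    simp
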